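/- Let H be a finite-dimensional complex Hilbert space, n ≥ 1, and let ρ_n, σ_n ∈ D(H^{⊗n}) be two states. Then for every integer k with 1 ≤ k ≤ n, the averaged trace distance between the size-k marginals is bounded by the Wasserstein distance: binom(n,k)^{−1} Σ_{I⊆[n], |I|=k} (1/2)‖(ρ_n)_I − (σ_n)_I‖₁ ≤ (k/n)·‖ρ_n − σ_n‖_{W1}. -/

import Mathlib

open scoped BigOperators ComplexOrder
open Filter Matrix

noncomputable section

namespace AlmostIID

/-- The trace norm `‖A‖₁ = Tr √(A†A)` of a square complex matrix. -/
def traceNorm {m : Type*} [Fintype m] [DecidableEq m] (A : Matrix m m ℂ) : ℝ :=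
  (((Matrix.posSemidef_conjTranspose_mul_self A).1.eigenvectorUnitary.1 *
      diagonal (((↑) : ℝ → ℂ) ∘ (√·) ∘ (Matrix.posSemidef_conjTranspose_mul_self A).1.eigenvalues) *
      (star (Matrix.posSemidef_conjTranspose_mul_self A).1.eigenvectorUnitary : Matrix m m ℂ)).trace).re

/-- A density matrix (state): positive semidefinite with unit trace. -/
def IsState {m : Type*} [Fintype m] (M : Matrix m m ℂ) : Prop :=
  M.PosSemidef ∧ M.trace = 1

/-- The marginal (reduced density matrix) of an `n`-partite operator on the
coordinates in `I`, i.e. the partial trace over the complement of `I`. -/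
def marginal {κ : Type*} [Fintype κ] {n : ℕ}
    (M : Matrix (Fin n → κ) (Fin n → κ) ℂ) (I : Finset (Fin n)) :
    Matrix ({i : Fin n // i ∈ I} → κ) ({i : Fin n // i ∈ I} → κ) ℂ :=
  fun a b => ∑ f : {i : Fin n // i ∉ I} → κ,
    M (fun i => if h : i ∈ I then a ⟨i, h⟩ else f ⟨i, h⟩)
      (fun i => if h : i ∈ I then b ⟨i, h⟩ else f ⟨i, h⟩)

/-- The single-site reduced density matrix on the `i`-th tensor factor. -/
def siteMarginal {κ : Type*} [Fintype κ] {n : ℕ}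
    (M : Matrix (Fin n → κ) (Fin n → κ) ℂ) (i : Fin n) : Matrix κ κ ℂ :=
  fun a b => ∑ f : {j : Fin n // j ≠ i} → κ,
    M (fun j => if h : j = i then a else f ⟨j, h⟩)
      (fun j => if h : j = i then b else f ⟨j, h⟩)

/-- The i.i.d. product state `ρ^{⊗ι}` on the tensor factors indexed by `ι`. -/
def iidOn {κ : Type*} (ι : Type*) [Fintype ι] (ρ : Matrix κ κ ℂ) :
    Matrix (ι → κ) (ι → κ) ℂ :=
  fun a b => ∏ i, ρ (a i) (b i)

/-- The product state `φ 0 ⊗ φ 1 ⊗ ⋯`. -/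
def prodState {κ : Type*} {ι : Type*} [Fintype ι] (φ : ι → Matrix κ κ ℂ) :
    Matrix (ι → κ) (ι → κ) ℂ :=
  fun a b => ∏ i, φ i (a i) (b i)

/-- The quantum Wasserstein norm of order 1 of a difference of states:
the minimum of `Σ cᵢ` over decompositions `X = Σ cᵢ (τ⁽ⁱ⁾ − η⁽ⁱ⁾)` with `cᵢ ≥ 0`,
`τ⁽ⁱ⁾, η⁽ⁱ⁾` states with equal partial traces over the `i`-th factor. -/
def W1 {κ : Type*} [Fintype κ] [DecidableEq κ] {n : ℕ}
    (X : Matrix (Fin n → κ) (Fin n → κ) ℂ) : ℝ :=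
  sInf { w : ℝ |
    ∃ (c : Fin n → ℝ) (τ η : Fin n → Matrix (Fin n → κ) (Fin n → κ) ℂ),
      (∀ i, 0 ≤ c i) ∧ (∀ i, IsState (τ i)) ∧ (∀ i, IsState (η i)) ∧
      (∀ i, marginal (τ i) ({i}ᶜ : Finset (Fin n)) = marginal (η i) ({i}ᶜ : Finset (Fin n))) ∧
      X = ∑ i, c i • (τ i - η i) ∧ w = ∑ i, c i }

/-- The local variation norm. -/
def LV {κ : Type*} [Fintype κ] [DecidableEq κ] {n : ℕ}
    (X : Matrix (Fin n → κ) (Fin n → κ) ℂ) : ℝ :=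
  (1/2) * ∑ k ∈ Finset.Icc 1 n, ((2:ℝ)^k)⁻¹ *
    (((n.choose k : ℝ))⁻¹ *
      ∑ I ∈ Finset.powersetCard k (Finset.univ : Finset (Fin n)),
        traceNorm (marginal X I))


section TN
variable {m : Type*} [Fintype m] [DecidableEq m]

open scoped MatrixOrder in
lemma psd_sqrt_unique {H B : Matrix m m ℂ} (hH : H.IsHermitian) (hB : B.PosSemidef) (h : B * B = H) :
    (hH.eigenvectorUnitary : Matrix m m ℂ) * diagonal (((↑) : ℝ → ℂ) ∘ (√·) ∘ hH.eigenvalues) *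
      (star hH.eigenvectorUnitary : Matrix m m ℂ) = B := by
  have hB0 : (0 : Matrix m m ℂ) ≤ B := Matrix.nonneg_iff_posSemidef.mpr hB
  have hH0 : (0 : Matrix m m ℂ) ≤ H := by
    rw [← h]
    nth_rewrite 1 [← hB.1.eq]
    exact Matrix.nonneg_iff_posSemidef.mpr (posSemidef_conjTranspose_mul_self B)
  have h1 := CFC.sqrt_unique h hB0
  rw [CFC.sqrt_eq_real_sqrt H hH0, cfcₙ_eq_cfc, hH.cfc_eq, IsHermitian.cfc,
    Unitary.conjStarAlgAut_apply] at h1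
  exact h1

open scoped MatrixOrder in
lemma psd_eq_conjTranspose_mul_self {A : Matrix m m ℂ} (hA : A.PosSemidef) :
    ∃ B : Matrix m m ℂ, A = Bᴴ * B := by
  have hA0 : (0 : Matrix m m ℂ) ≤ A := Matrix.nonneg_iff_posSemidef.mpr hA
  refine ⟨CFC.sqrt A, ?_⟩
  rw [← Matrix.star_eq_conjTranspose, (IsSelfAdjoint.of_nonneg (CFC.sqrt_nonneg A)).star_eq,
    CFC.sqrt_mul_sqrt_self A hA0]

lemma psd_entry_diag_nonneg {A : Matrix m m ℂ} (hA : A.PosSemidef) (j : m) :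
    0 ≤ A j j := by
  exact hA.diag_nonneg

lemma psd_trace_re_nonneg {A : Matrix m m ℂ} (hA : A.PosSemidef) :
    0 ≤ A.trace.re := by
  rw [Matrix.trace, Complex.re_sum]
  exact Finset.sum_nonneg fun j _ => (Complex.le_def.mp (psd_entry_diag_nonneg hA j)).1

lemma psd_mul_trace_re_nonneg {A B : Matrix m m ℂ} (hA : A.PosSemidef) (hB : B.PosSemidef) :
    0 ≤ (A * B).trace.re := by
  obtain ⟨C, hC⟩ := psd_eq_conjTranspose_mul_self hA
  rw [hC, Matrix.mul_assoc, Matrix.trace_mul_comm]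
  exact psd_trace_re_nonneg (hB.mul_mul_conjTranspose_same C)

/-- conjugation by a unitary of a real diagonal -/
def umat (U : Matrix m m ℂ) (v : m → ℝ) : Matrix m m ℂ :=
  U * Matrix.diagonal (fun j => (v j : ℂ)) * Uᴴ

lemma umat_mul {U : Matrix m m ℂ} (hU : U ∈ Matrix.unitaryGroup m ℂ) (v w : m → ℝ) :
    umat U v * umat U w = umat U (fun j => v j * w j) := by
  have h1 : Uᴴ * U = 1 := by
    rw [← Matrix.star_eq_conjTranspose]
    exact Matrix.mem_unitaryGroup_iff'.mp hU
  simp only [umat, Matrix.mul_assoc]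
  rw [← Matrix.mul_assoc Uᴴ U, h1, Matrix.one_mul,
    ← Matrix.mul_assoc (Matrix.diagonal _) (Matrix.diagonal _), Matrix.diagonal_mul_diagonal]
  push_cast
  rfl

lemma umat_add (U : Matrix m m ℂ) (v w : m → ℝ) :
    umat U v + umat U w = umat U (fun j => v j + w j) := by
  simp only [umat]
  rw [← Matrix.add_mul, ← Matrix.mul_add, Matrix.diagonal_add]
  norm_cast

lemma umat_psd {U : Matrix m m ℂ} {v : m → ℝ} (hv : ∀ j, 0 ≤ v j) :
    (umat U v).PosSemidef := by
  refine (Matrix.PosSemidef.diagonal ?_).mul_mul_conjTranspose_same U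
  intro j
  exact Complex.zero_le_real.mpr (hv j)

lemma umat_trace {U : Matrix m m ℂ} (hU : U ∈ Matrix.unitaryGroup m ℂ) (v : m → ℝ) :
    (umat U v).trace = ((∑ j, v j : ℝ) : ℂ) := by
  have h1 : Uᴴ * U = 1 := by
    rw [← Matrix.star_eq_conjTranspose]
    exact Matrix.mem_unitaryGroup_iff'.mp hU
  rw [umat, Matrix.trace_mul_cycle, h1, Matrix.one_mul, Matrix.trace_diagonal]
  push_cast
  rfl

lemma umat_one {U : Matrix m m ℂ} (hU : U ∈ Matrix.unitaryGroup m ℂ) :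
    umat U (fun _ => 1) = 1 := by
  have h2 : U * Uᴴ = 1 := by
    rw [← Matrix.star_eq_conjTranspose]
    exact Matrix.mem_unitaryGroup_iff.mp hU
  simp only [umat, Complex.ofReal_one]
  rw [Matrix.diagonal_one, Matrix.mul_one, h2]

lemma herm_eq_umat {X : Matrix m m ℂ} (hX : X.IsHermitian) :
    X = umat (hX.eigenvectorUnitary : Matrix m m ℂ) hX.eigenvalues := by
  conv_lhs => rw [hX.spectral_theorem]
  rfl

lemma traceNorm_psd {A : Matrix m m ℂ} (hA : A.PosSemidef) :
    traceNorm A = A.trace.re := by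
  have h := psd_sqrt_unique (Matrix.posSemidef_conjTranspose_mul_self A).1 hA (by rw [hA.1.eq])
  rw [traceNorm, h]

/-- Key bound: trace norm of a difference of two PSD matrices. -/
lemma traceNorm_sub_psd_le {X P Q : Matrix m m ℂ} (hP : P.PosSemidef) (hQ : Q.PosSemidef)
    (hX : X = P - Q) : traceNorm X ≤ P.trace.re + Q.trace.re := by
  have hXh : X.IsHermitian := by rw [hX]; exact hP.1.sub hQ.1
  set U : Matrix m m ℂ := (hXh.eigenvectorUnitary : Matrix m m ℂ) with hUdef
  have hU : U ∈ Matrix.unitaryGroup m ℂ := (hXh.eigenvectorUnitary).2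
  set lam : m → ℝ := hXh.eigenvalues with hlamdef
  have hXmat : X = umat U lam := herm_eq_umat hXh
  -- the absolute value matrix
  have habs : (umat U (fun j => |lam j|)).PosSemidef := umat_psd (fun j => abs_nonneg _)
  have hfun : (fun j => |lam j| * |lam j|) = (fun j => lam j * lam j) := by
    funext j; rw [← abs_mul, abs_mul_self (lam j)]
  have h5 : Xᴴ * X = umat U (fun j => lam j * lam j) := by
    rw [hXh.eq]
    conv_lhs => rw [hXmat]
    rw [umat_mul hU]
  have hsq : (umat U (fun j => |lam j|)) ^ 2 = Xᴴ * X := by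
    rw [pow_two, umat_mul hU, hfun, h5]
  have hS := (psd_sqrt_unique (Matrix.posSemidef_conjTranspose_mul_self X).1 habs
    (by rw [← pow_two]; exact hsq)).symm
  have htn : traceNorm X = ∑ j, |lam j| := by
    rw [traceNorm, ← hS, umat_trace hU]
    simp
  -- negative part bound
  set neg : m → ℝ := fun j => if lam j < 0 then -lam j else 0 with hnegdef
  set ind : m → ℝ := fun j => if lam j < 0 then 1 else 0 with hinddef
  have hXtr : X.trace.re = ∑ j, lam j := by
    rw [hXmat, umat_trace hU]
    simp
  have hPQtr : X.trace.re = P.trace.re - Q.trace.re := by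
    rw [hX, Matrix.trace_sub, Complex.sub_re]
  have hPi : (umat U ind).PosSemidef := umat_psd (fun j => by by_cases h : lam j < 0 <;> simp [ind, h])
  have hPi' : (umat U (fun j => 1 - ind j)).PosSemidef :=
    umat_psd (fun j => by by_cases h : lam j < 0 <;> simp [ind, h])
  have hXPi : (X * umat U ind).trace.re = -(∑ j, neg j) := by
    rw [hXmat, umat_mul hU, umat_trace hU]
    rw [Complex.ofReal_re]
    rw [← Finset.sum_neg_distrib]
    apply Finset.sum_congr rfl
    intro j _
    by_cases h : lam j < 0 <;> simp [ind, neg, h]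
  have hQsplit : Q * umat U ind + Q * umat U (fun j => 1 - ind j) = Q := by
    rw [← Matrix.mul_add]
    have h6 : umat U ind + umat U (fun j => 1 - ind j) = 1 := by
      rw [umat_add]
      have : (fun j => ind j + (1 - ind j)) = fun _ => (1:ℝ) := funext fun j => by ring
      rw [this, umat_one hU]
    rw [h6, Matrix.mul_one]
  have hQneg : (∑ j, neg j) ≤ Q.trace.re := by
    have h1 : (Q * umat U ind).trace.re = (P * umat U ind).trace.re - (X * umat U ind).trace.re := by
      rw [hX, Matrix.sub_mul, Matrix.trace_sub, Complex.sub_re]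
      ring
    have h2 : 0 ≤ (P * umat U ind).trace.re := psd_mul_trace_re_nonneg hP hPi
    have h3 : 0 ≤ (Q * umat U (fun j => 1 - ind j)).trace.re := psd_mul_trace_re_nonneg hQ hPi'
    have h4 : Q.trace.re = (Q * umat U ind).trace.re + (Q * umat U (fun j => 1 - ind j)).trace.re := by
      rw [← Complex.add_re, ← Matrix.trace_add, hQsplit]
    rw [h4, h1, hXPi]
    linarith
  have habs2 : ∀ j, |lam j| = lam j + 2 * neg j := by
    intro j
    by_cases h : lam j < 0
    · simp only [hnegdef, if_pos h]
      rw [abs_of_neg h]; ring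
    · simp only [hnegdef, if_neg h]
      rw [abs_of_nonneg (not_lt.mp h)]; ring
  rw [htn]
  calc ∑ j, |lam j| = (∑ j, lam j) + 2 * ∑ j, neg j := by
        rw [Finset.mul_sum, ← Finset.sum_add_distrib]
        exact Finset.sum_congr rfl fun j _ => habs2 j
    _ ≤ (P.trace.re - Q.trace.re) + 2 * Q.trace.re := by
        rw [← hXtr, hPQtr]
        linarith
    _ = P.trace.re + Q.trace.re := by ring

end TN

section Marg
variable {κ : Type*} [Fintype κ] [DecidableEq κ] {n : ℕ}

/-- splitting equiv matching `marginal`'s glue -/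
def eM (I : Finset (Fin n)) : (Fin n → κ) ≃ ({x : Fin n // x ∈ I} → κ) × ({x : Fin n // x ∉ I} → κ) where
  toFun a := (fun s => a s.1, fun s => a s.1)
  invFun pq := fun x => if h : x ∈ I then pq.1 ⟨x, h⟩ else pq.2 ⟨x, h⟩
  left_inv a := by funext x; by_cases h : x ∈ I <;> simp [h]
  right_inv pq := by
    refine Prod.ext ?_ ?_ <;> funext s
    · simp [s.2]
    · simp [s.2]

lemma marginal_eq_sum_eM (M : Matrix (Fin n → κ) (Fin n → κ) ℂ) (I : Finset (Fin n))
    (a b : {x : Fin n // x ∈ I} → κ) :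
    marginal M I a b = ∑ f : {x : Fin n // x ∉ I} → κ,
      M ((eM I).symm (a, f)) ((eM I).symm (b, f)) := rfl

def cmb (I : Finset (Fin n)) (u g : Fin n → κ) : Fin n → κ := fun x => if x ∈ I then u x else g x

def restr (I : Finset (Fin n)) (u : Fin n → κ) : {x : Fin n // x ∈ I} → κ := fun s => u s.1

lemma cmb_eM_symm (I : Finset (Fin n)) (u g : Fin n → κ) :
    cmb I u g = (eM I).symm (restr I u, ((eM I) g).2) := by
  funext x
  by_cases h : x ∈ I <;> simp [cmb, eM, restr, h]

lemma marg_combine (M : Matrix (Fin n → κ) (Fin n → κ) ℂ) (I : Finset (Fin n)) (u v : Fin n → κ) :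
    ∑ g : Fin n → κ, M (cmb I u g) (cmb I v g)
      = (Fintype.card ({x : Fin n // x ∈ I} → κ) : ℂ) * marginal M I (restr I u) (restr I v) := by
  have key : ∀ (w : Fin n → κ) (p : {x : Fin n // x ∈ I} → κ) (f : {x : Fin n // x ∉ I} → κ),
      cmb I w ((eM I).symm (p, f)) = (eM I).symm (restr I w, f) := by
    intro w p f
    funext x
    by_cases h : x ∈ I <;> simp [cmb, eM, restr, h]
  calc ∑ g : Fin n → κ, M (cmb I u g) (cmb I v g)
      = ∑ pq : ({x : Fin n // x ∈ I} → κ) × ({x : Fin n // x ∉ I} → κ),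
          M (cmb I u ((eM I).symm pq)) (cmb I v ((eM I).symm pq)) :=
        (Equiv.sum_comp (eM I).symm _).symm
    _ = ∑ p : {x : Fin n // x ∈ I} → κ, ∑ f : {x : Fin n // x ∉ I} → κ,
          M ((eM I).symm (restr I u, f)) ((eM I).symm (restr I v, f)) := by
        rw [Fintype.sum_prod_type]
        exact Finset.sum_congr rfl fun p _ => Finset.sum_congr rfl fun f _ => by
          rw [key u p f, key v p f]
    _ = (Fintype.card ({x : Fin n // x ∈ I} → κ) : ℂ) * marginal M I (restr I u) (restr I v) := by
        rw [Finset.sum_const, Finset.card_univ, nsmul_eq_mul, marginal_eq_sum_eM]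

lemma exists_restr [Nonempty κ] (I : Finset (Fin n)) (a : {x : Fin n // x ∈ I} → κ) :
    ∃ u : Fin n → κ, restr I u = a := by
  refine ⟨fun x => if h : x ∈ I then a ⟨x, h⟩ else Classical.arbitrary κ, ?_⟩
  funext s
  simp [restr, s.2]

lemma card_fn_ne_zero [Nonempty κ] (I : Finset (Fin n)) :
    (Fintype.card ({x : Fin n // x ∈ I} → κ) : ℂ) ≠ 0 :=
  Nat.cast_ne_zero.mpr Fintype.card_ne_zero

lemma marg_of_cmb_eq [Nonempty κ] {M N : Matrix (Fin n → κ) (Fin n → κ) ℂ} {I : Finset (Fin n)}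
    (h : ∀ u v : Fin n → κ, ∑ g : Fin n → κ, M (cmb I u g) (cmb I v g)
        = ∑ g : Fin n → κ, N (cmb I u g) (cmb I v g)) :
    marginal M I = marginal N I := by
  ext a b
  obtain ⟨u, hu⟩ := exists_restr I a
  obtain ⟨v, hv⟩ := exists_restr I b
  have h2 := h u v
  rw [marg_combine, marg_combine, hu, hv] at h2
  exact mul_left_cancel₀ (card_fn_ne_zero I) h2

/-- auxiliary equiv for summing over one coordinate -/
def eU (i : Fin n) : (Fin n → κ) ≃ κ × ({x : Fin n // x ≠ i} → κ) where
  toFun g := (g i, fun s => g s.1)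
  invFun zr := fun x => if h : x = i then zr.1 else zr.2 ⟨x, h⟩
  left_inv g := by
    funext x
    by_cases h : x = i
    · subst h; simp
    · simp [h]
  right_inv zr := by
    refine Prod.ext (by simp) ?_
    funext s
    simp [s.2]

lemma upd_eU_symm (i : Fin n) (z y : κ) (r : {x : Fin n // x ≠ i} → κ) :
    Function.update ((eU i).symm (z, r)) i y = (eU i).symm (y, r) := by
  funext x
  by_cases h : x = i
  · subst h; simp [eU]
  · simp [Function.update_of_ne h, eU, h]

lemma upd_sum (i : Fin n) (ψ : (Fin n → κ) → ℂ) :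
    ∑ g : Fin n → κ, ∑ y : κ, ψ (Function.update g i y)
      = (Fintype.card κ : ℂ) * ∑ g : Fin n → κ, ψ g := by
  calc ∑ g : Fin n → κ, ∑ y : κ, ψ (Function.update g i y)
      = ∑ zr : κ × ({x : Fin n // x ≠ i} → κ), ∑ y : κ,
          ψ (Function.update ((eU i).symm zr) i y) := (Equiv.sum_comp (eU i).symm _).symm
    _ = ∑ z : κ, ∑ r : {x : Fin n // x ≠ i} → κ, ∑ y : κ, ψ ((eU i).symm (y, r)) := by
        rw [Fintype.sum_prod_type]
        exact Finset.sum_congr rfl fun z _ => Finset.sum_congr rfl fun r _ =>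
          Finset.sum_congr rfl fun y _ => by rw [upd_eU_symm]
    _ = ∑ z : κ, ∑ g : Fin n → κ, ψ g := by
        refine Finset.sum_congr rfl fun z _ => ?_
        have h7 := Equiv.sum_comp (eU i).symm ψ
        rw [Fintype.sum_prod_type] at h7
        rw [Finset.sum_comm]
        exact h7
    _ = (Fintype.card κ : ℂ) * ∑ g : Fin n → κ, ψ g := by
        rw [Finset.sum_const, Finset.card_univ, nsmul_eq_mul]

instance uniq_not_compl (i : Fin n) : Unique {x : Fin n // x ∉ ({i}ᶜ : Finset (Fin n))} :=
  ⟨⟨⟨i, by simp⟩⟩, fun a => Subtype.ext (by have := a.2; simpa using this)⟩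

lemma upd_eq_glue (i : Fin n) (u : Fin n → κ) (y : κ) :
    Function.update u i y
      = (eM ({i}ᶜ : Finset (Fin n))).symm (restr _ u, (Equiv.funUnique _ κ).symm y) := by
  funext x
  by_cases h : x = i
  · subst h
    simp [eM, restr, Equiv.funUnique]
  · simp [Function.update_of_ne h, eM, restr, h, Equiv.funUnique]

lemma marg_single (M : Matrix (Fin n → κ) (Fin n → κ) ℂ) (i : Fin n) (u v : Fin n → κ) :
    ∑ y : κ, M (Function.update u i y) (Function.update v i y)
      = marginal M ({i}ᶜ : Finset (Fin n)) (restr _ u) (restr _ v) := by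
  rw [marginal_eq_sum_eM,
    ← Equiv.sum_comp (Equiv.funUnique {x : Fin n // x ∉ ({i}ᶜ : Finset (Fin n))} κ).symm]
  exact Finset.sum_congr rfl fun y _ => by rw [upd_eq_glue, upd_eq_glue]

lemma marg_eq_of_site_marg_eq [Nonempty κ] {τ η : Matrix (Fin n → κ) (Fin n → κ) ℂ} {i : Fin n}
    (h : marginal τ ({i}ᶜ : Finset (Fin n)) = marginal η ({i}ᶜ : Finset (Fin n)))
    {I : Finset (Fin n)} (hiI : i ∉ I) : marginal τ I = marginal η I := by
  have hD : ∀ u v : Fin n → κ, ∑ y : κ, τ (Function.update u i y) (Function.update v i y)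
      = ∑ y : κ, η (Function.update u i y) (Function.update v i y) := by
    intro u v
    rw [marg_single, marg_single, h]
  apply marg_of_cmb_eq
  intro u v
  apply mul_left_cancel₀ (show (Fintype.card κ : ℂ) ≠ 0 from Nat.cast_ne_zero.mpr Fintype.card_ne_zero)
  rw [← upd_sum i (fun g => τ (cmb I u g) (cmb I v g)),
    ← upd_sum i (fun g => η (cmb I u g) (cmb I v g))]
  refine Finset.sum_congr rfl fun g _ => ?_
  have key : ∀ w : Fin n → κ, ∀ y : κ, cmb I w (Function.update g i y)
      = Function.update (cmb I w g) i y := by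
    intro w y
    funext x
    by_cases h1 : x = i
    · subst h1
      simp [cmb, hiI, Function.update_self]
    · simp [cmb, Function.update_of_ne h1]
  simp only [key]
  exact hD (cmb I u g) (cmb I v g)

lemma card_fn_insert {i : Fin n} {J : Finset (Fin n)} (hiJ : i ∉ J) :
    (Fintype.card ({x : Fin n // x ∈ insert i J} → κ) : ℂ)
      = (Fintype.card κ : ℂ) * (Fintype.card ({x : Fin n // x ∈ J} → κ) : ℂ) := by
  have h1 : Fintype.card ({x : Fin n // x ∈ insert i J} → κ)
      = Fintype.card κ * Fintype.card ({x : Fin n // x ∈ J} → κ) := by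
    simp only [Fintype.card_fun, Fintype.card_coe, Finset.card_insert_of_notMem hiJ, pow_succ]
    ring
  exact_mod_cast congrArg Nat.cast h1

lemma marg_SM [Nonempty κ] (M : Matrix (Fin n → κ) (Fin n → κ) ℂ) {i : Fin n} {J : Finset (Fin n)}
    (hiJ : i ∉ J) (u v : Fin n → κ) :
    ∑ y : κ, marginal M (insert i J) (restr _ (Function.update u i y)) (restr _ (Function.update v i y))
      = marginal M J (restr J u) (restr J v) := by
  refine mul_left_cancel₀ (card_fn_ne_zero (κ := κ) (insert i J)) ?_
  have key : ∀ (w g : Fin n → κ) (y : κ), cmb (insert i J) (Function.update w i y) g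
      = cmb J w (Function.update g i y) := by
    intro w g y
    funext x
    by_cases h1 : x = i
    · subst h1
      simp [cmb, hiJ, Function.update_self]
    · by_cases h2 : x ∈ J <;>
        simp [cmb, h1, h2, Function.update_of_ne h1]
  calc (Fintype.card ({x : Fin n // x ∈ insert i J} → κ) : ℂ) *
        ∑ y : κ, marginal M (insert i J) (restr _ (Function.update u i y)) (restr _ (Function.update v i y))
      = ∑ y : κ, ∑ g : Fin n → κ,
          M (cmb (insert i J) (Function.update u i y) g) (cmb (insert i J) (Function.update v i y) g) := by
        rw [Finset.mul_sum]
        exact Finset.sum_congr rfl fun y _ => (marg_combine M (insert i J) _ _).symm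
    _ = ∑ g : Fin n → κ, ∑ y : κ,
          M (cmb J u (Function.update g i y)) (cmb J v (Function.update g i y)) := by
        rw [Finset.sum_comm]
        exact Finset.sum_congr rfl fun g _ => Finset.sum_congr rfl fun y _ => by
          rw [key u g y, key v g y]
    _ = (Fintype.card κ : ℂ) * ∑ g : Fin n → κ, M (cmb J u g) (cmb J v g) :=
        upd_sum i (fun g => M (cmb J u g) (cmb J v g))
    _ = (Fintype.card κ : ℂ) * ((Fintype.card ({x : Fin n // x ∈ J} → κ) : ℂ) *
          marginal M J (restr J u) (restr J v)) := by rw [marg_combine]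
    _ = (Fintype.card ({x : Fin n // x ∈ insert i J} → κ) : ℂ) *
          marginal M J (restr J u) (restr J v) := by rw [card_fn_insert hiJ]; ring

lemma marg_psd {M : Matrix (Fin n → κ) (Fin n → κ) ℂ} (hM : M.PosSemidef) (I : Finset (Fin n)) :
    (marginal M I).PosSemidef := by
  obtain ⟨C, hC⟩ := psd_eq_conjTranspose_mul_self hM
  set D : Matrix ((Fin n → κ) × ({x : Fin n // x ∉ I} → κ)) ({x : Fin n // x ∈ I} → κ) ℂ :=
    fun p a => C p.1 ((eM I).symm (a, p.2)) with hD
  have : marginal M I = Dᴴ * D := by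
    ext a b
    rw [Matrix.mul_apply, marginal_eq_sum_eM]
    calc ∑ f : {x : Fin n // x ∉ I} → κ, M ((eM I).symm (a, f)) ((eM I).symm (b, f))
        = ∑ f : {x : Fin n // x ∉ I} → κ, ∑ g : Fin n → κ,
            star (C g ((eM I).symm (a, f))) * C g ((eM I).symm (b, f)) := by
          refine Finset.sum_congr rfl fun f _ => ?_
          rw [hC, Matrix.mul_apply]
          exact Finset.sum_congr rfl fun g _ => by rw [Matrix.conjTranspose_apply]
      _ = ∑ g : Fin n → κ, ∑ f : {x : Fin n // x ∉ I} → κ,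
            star (C g ((eM I).symm (a, f))) * C g ((eM I).symm (b, f)) := Finset.sum_comm
      _ = ∑ p : (Fin n → κ) × ({x : Fin n // x ∉ I} → κ), Dᴴ a p * D p b := by
          rw [Fintype.sum_prod_type]
          exact Finset.sum_congr rfl fun g _ => Finset.sum_congr rfl fun f _ => by
            rw [Matrix.conjTranspose_apply]
  rw [this]
  exact Matrix.posSemidef_conjTranspose_mul_self D

lemma marg_trace (M : Matrix (Fin n → κ) (Fin n → κ) ℂ) (I : Finset (Fin n)) :
    (marginal M I).trace = M.trace := by
  rw [Matrix.trace, Matrix.trace]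
  have h1 := Equiv.sum_comp (eM I).symm (fun g => M g g)
  rw [Fintype.sum_prod_type] at h1
  calc ∑ a, (marginal M I).diag a
      = ∑ a : {x : Fin n // x ∈ I} → κ, ∑ f : {x : Fin n // x ∉ I} → κ,
          M ((eM I).symm (a, f)) ((eM I).symm (a, f)) :=
        Finset.sum_congr rfl fun a _ => marginal_eq_sum_eM M I a a
    _ = ∑ g, M g g := h1
    _ = ∑ a, M.diag a := rfl

lemma marg_sub (A B : Matrix (Fin n → κ) (Fin n → κ) ℂ) (I : Finset (Fin n)) :
    marginal (A - B) I = marginal A I - marginal B I := by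
  ext a b
  simp [marginal, Matrix.sub_apply, Finset.sum_sub_distrib]

lemma marg_sum {ι : Type*} (s : Finset ι) (F : ι → Matrix (Fin n → κ) (Fin n → κ) ℂ)
    (I : Finset (Fin n)) :
    marginal (∑ j ∈ s, F j) I = ∑ j ∈ s, marginal (F j) I := by
  ext a b
  simp only [marginal, Matrix.sum_apply]
  rw [Finset.sum_comm]

lemma marg_smul (c : ℝ) (A : Matrix (Fin n → κ) (Fin n → κ) ℂ) (I : Finset (Fin n)) :
    marginal (c • A) I = c • marginal A I := by
  ext a b
  simp [marginal, Matrix.smul_apply, Finset.smul_sum]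

end Marg


section Omega
variable {κ : Type*} [Fintype κ] [DecidableEq κ] {n : ℕ}

lemma restr_update_of_not_mem {S : Finset (Fin n)} {i : Fin n} (hiS : i ∉ S)
    (u : Fin n → κ) (y : κ) : restr S (Function.update u i y) = restr S u := by
  funext s
  refine Function.update_of_ne ?_ _ _
  rintro rfl
  exact hiS s.2

/-- interpolating product state -/
def omegaJ (ρ σ : Matrix (Fin n → κ) (Fin n → κ) ℂ) (J : Finset (Fin n)) :
    Matrix (Fin n → κ) (Fin n → κ) ℂ :=
  fun a b => marginal ρ J (restr J a) (restr J b) * marginal σ Jᶜ (restr Jᶜ a) (restr Jᶜ b)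

lemma omega_psd {ρ σ : Matrix (Fin n → κ) (Fin n → κ) ℂ} (hρ : ρ.PosSemidef)
    (hσ : σ.PosSemidef) (J : Finset (Fin n)) : (omegaJ ρ σ J).PosSemidef := by
  obtain ⟨C, hC⟩ := psd_eq_conjTranspose_mul_self (marg_psd hρ J)
  obtain ⟨D, hD⟩ := psd_eq_conjTranspose_mul_self (marg_psd hσ Jᶜ)
  set E : Matrix (({x : Fin n // x ∈ J} → κ) × ({x : Fin n // x ∈ Jᶜ} → κ)) (Fin n → κ) ℂ :=
    fun p a => C p.1 (restr J a) * D p.2 (restr Jᶜ a) with hE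
  have : omegaJ ρ σ J = Eᴴ * E := by
    ext a b
    rw [Matrix.mul_apply]
    calc omegaJ ρ σ J a b
        = (∑ g, star (C g (restr J a)) * C g (restr J b)) *
            (∑ h, star (D h (restr Jᶜ a)) * D h (restr Jᶜ b)) := by
          rw [omegaJ, hC, hD, Matrix.mul_apply, Matrix.mul_apply]
          congr 1 <;> exact Finset.sum_congr rfl fun g _ => by rw [Matrix.conjTranspose_apply]
      _ = ∑ g, ∑ h, (star (C g (restr J a)) * C g (restr J b)) *
            (star (D h (restr Jᶜ a)) * D h (restr Jᶜ b)) := by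
          rw [Finset.sum_mul_sum]
      _ = ∑ p : ({x : Fin n // x ∈ J} → κ) × ({x : Fin n // x ∈ Jᶜ} → κ), Eᴴ a p * E p b := by
          rw [Fintype.sum_prod_type]
          refine Finset.sum_congr rfl fun g _ => Finset.sum_congr rfl fun h _ => ?_
          rw [Matrix.conjTranspose_apply, hE]
          simp only [star_mul']
          ring
  rw [this]
  exact Matrix.posSemidef_conjTranspose_mul_self E

/-- equiv between the two complement subtypes -/
def eA (J : Finset (Fin n)) : ({x : Fin n // x ∉ J} → κ) ≃ ({x : Fin n // x ∈ Jᶜ} → κ) where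
  toFun f := fun s => f ⟨s.1, Finset.mem_compl.mp s.2⟩
  invFun q := fun s => q ⟨s.1, Finset.mem_compl.mpr s.2⟩
  left_inv f := funext fun s => congrArg f (Subtype.ext rfl)
  right_inv q := funext fun s => congrArg q (Subtype.ext rfl)

lemma omega_trace {ρ σ : Matrix (Fin n → κ) (Fin n → κ) ℂ} (J : Finset (Fin n)) :
    (omegaJ ρ σ J).trace = ρ.trace * σ.trace := by
  have h1 : ∀ (p : {x : Fin n // x ∈ J} → κ) (f : {x : Fin n // x ∉ J} → κ),
      restr J ((eM J).symm (p, f)) = p := by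
    intro p f
    funext s
    simp [restr, eM, s.2]
  have h2 : ∀ (p : {x : Fin n // x ∈ J} → κ) (f : {x : Fin n // x ∉ J} → κ),
      restr Jᶜ ((eM J).symm (p, f)) = eA J f := by
    intro p f
    funext s
    have hs : s.1 ∉ J := Finset.mem_compl.mp s.2
    simp [restr, eM, eA, hs]
  have key := Equiv.sum_comp (eM J).symm (fun g => omegaJ ρ σ J g g)
  rw [Fintype.sum_prod_type] at key
  calc (omegaJ ρ σ J).trace
      = ∑ g, omegaJ ρ σ J g g := rfl
    _ = ∑ p : {x : Fin n // x ∈ J} → κ, ∑ f : {x : Fin n // x ∉ J} → κ,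
          marginal ρ J p p * marginal σ Jᶜ (eA J f) (eA J f) := by
        rw [← key]
        refine Finset.sum_congr rfl fun p _ => Finset.sum_congr rfl fun f _ => ?_
        rw [show omegaJ ρ σ J ((eM J).symm (p, f)) ((eM J).symm (p, f))
            = marginal ρ J (restr J ((eM J).symm (p, f))) (restr J ((eM J).symm (p, f))) *
              marginal σ Jᶜ (restr Jᶜ ((eM J).symm (p, f))) (restr Jᶜ ((eM J).symm (p, f)))
          from rfl, h1, h2]
    _ = (∑ p, marginal ρ J p p) * (∑ f : {x : Fin n // x ∉ J} → κ,
          marginal σ Jᶜ (eA J f) (eA J f)) := by rw [Finset.sum_mul_sum]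
    _ = (marginal ρ J).trace * (marginal σ Jᶜ).trace := by
        congr 1
        exact Equiv.sum_comp (eA J) (fun q => marginal σ Jᶜ q q)
    _ = ρ.trace * σ.trace := by rw [marg_trace, marg_trace]

lemma marg_empty (σ : Matrix (Fin n → κ) (Fin n → κ) ℂ) {K : Finset (Fin n)} (hK : K = ∅)
    (a b : {x : Fin n // x ∈ K} → κ) : marginal σ K a b = σ.trace := by
  subst hK
  set eE : ({x : Fin n // x ∉ (∅ : Finset (Fin n))} → κ) ≃ (Fin n → κ) :=
    { toFun := fun f => fun x => f ⟨x, Finset.notMem_empty x⟩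
      invFun := fun g => fun s => g s.1
      left_inv := fun f => funext fun s => congrArg f (Subtype.ext rfl)
      right_inv := fun g => rfl } with heE
  have h3 : ∀ (f : {x : Fin n // x ∉ (∅ : Finset (Fin n))} → κ)
      (c : {x : Fin n // x ∈ (∅ : Finset (Fin n))} → κ), (eM ∅).symm (c, f) = eE f := by
    intro f c
    funext x
    simp [eM, eE, Finset.notMem_empty]
  calc marginal σ ∅ a b
      = ∑ f : {x : Fin n // x ∉ (∅ : Finset (Fin n))} → κ, σ (eE f) (eE f) := by
        rw [marginal_eq_sum_eM]
        exact Finset.sum_congr rfl fun f _ => by rw [h3 f a, h3 f b]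
    _ = ∑ g, σ g g := Equiv.sum_comp eE (fun g => σ g g)
    _ = σ.trace := rfl

lemma marg_univ (M : Matrix (Fin n → κ) (Fin n → κ) ℂ) {K : Finset (Fin n)}
    (hK : K = Finset.univ) (u v : Fin n → κ) :
    marginal M K (restr K u) (restr K v) = M u v := by
  subst hK
  haveI : IsEmpty {x : Fin n // x ∉ (Finset.univ : Finset (Fin n))} :=
    ⟨fun s => s.2 (Finset.mem_univ s.1)⟩
  haveI : Unique ({x : Fin n // x ∉ (Finset.univ : Finset (Fin n))} → κ) :=
    Pi.uniqueOfIsEmpty _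
  rw [marginal_eq_sum_eM, Fintype.sum_unique]
  have h4 : ∀ w : Fin n → κ, (eM (Finset.univ : Finset (Fin n))).symm
      (restr Finset.univ w, default) = w := by
    intro w
    funext x
    simp [eM, restr]
  rw [h4, h4]

lemma omega_univ {ρ σ : Matrix (Fin n → κ) (Fin n → κ) ℂ} (hσ : σ.trace = 1) :
    omegaJ ρ σ (Finset.univ : Finset (Fin n)) = ρ := by
  ext a b
  rw [show omegaJ ρ σ Finset.univ a b
      = marginal ρ Finset.univ (restr _ a) (restr _ b) *
        marginal σ Finset.univᶜ (restr _ a) (restr _ b) from rfl,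
    marg_univ ρ rfl, marg_empty σ Finset.compl_univ, hσ, mul_one]

lemma omega_empty {ρ σ : Matrix (Fin n → κ) (Fin n → κ) ℂ} (hρ : ρ.trace = 1) :
    omegaJ ρ σ (∅ : Finset (Fin n)) = σ := by
  ext a b
  rw [show omegaJ ρ σ ∅ a b
      = marginal ρ ∅ (restr _ a) (restr _ b) * marginal σ ∅ᶜ (restr _ a) (restr _ b) from rfl,
    marg_empty ρ rfl, hρ, one_mul]
  exact marg_univ σ Finset.compl_empty a b

lemma omega_marg_step [Nonempty κ] {ρ σ : Matrix (Fin n → κ) (Fin n → κ) ℂ}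
    {i : Fin n} {J : Finset (Fin n)} (hiJ : i ∉ J) :
    marginal (omegaJ ρ σ (insert i J)) ({i}ᶜ : Finset (Fin n))
      = marginal (omegaJ ρ σ J) ({i}ᶜ : Finset (Fin n)) := by
  ext a b
  obtain ⟨u, hu⟩ := exists_restr _ a
  obtain ⟨v, hv⟩ := exists_restr _ b
  rw [← hu, ← hv, ← marg_single, ← marg_single]
  have hins : i ∉ (insert i J)ᶜ := by simp
  have hJc : (Jᶜ : Finset (Fin n)) = insert i ((insert i J)ᶜ) := by
    ext x
    by_cases hx : x = i <;> simp [hx, hiJ]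
  calc ∑ y : κ, omegaJ ρ σ (insert i J) (Function.update u i y) (Function.update v i y)
      = ∑ y : κ, marginal ρ (insert i J) (restr _ (Function.update u i y))
          (restr _ (Function.update v i y)) *
          marginal σ ((insert i J)ᶜ) (restr _ u) (restr _ v) := by
        refine Finset.sum_congr rfl fun y _ => ?_
        rw [show omegaJ ρ σ (insert i J) (Function.update u i y) (Function.update v i y)
            = marginal ρ (insert i J) (restr _ (Function.update u i y))
                (restr _ (Function.update v i y)) *
              marginal σ ((insert i J)ᶜ) (restr _ (Function.update u i y))
                (restr _ (Function.update v i y)) from rfl,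
          restr_update_of_not_mem hins, restr_update_of_not_mem hins]
    _ = marginal ρ J (restr J u) (restr J v) *
          marginal σ ((insert i J)ᶜ) (restr _ u) (restr _ v) := by
        rw [← Finset.sum_mul, marg_SM ρ hiJ]
    _ = ∑ y : κ, omegaJ ρ σ J (Function.update u i y) (Function.update v i y) := by
        have hstep : ∑ y : κ, marginal σ (Jᶜ) (restr _ (Function.update u i y))
            (restr _ (Function.update v i y))
            = marginal σ ((insert i J)ᶜ) (restr _ u) (restr _ v) := by
          rw [hJc]
          exact marg_SM σ hins u v
        rw [← hstep, Finset.mul_sum]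
        refine Finset.sum_congr rfl fun y _ => ?_
        rw [show omegaJ ρ σ J (Function.update u i y) (Function.update v i y)
            = marginal ρ J (restr _ (Function.update u i y)) (restr _ (Function.update v i y)) *
              marginal σ (Jᶜ) (restr _ (Function.update u i y))
                (restr _ (Function.update v i y)) from rfl,
          restr_update_of_not_mem hiJ, restr_update_of_not_mem hiJ]

end Omega

section MainAux
variable {κ : Type*} [Fintype κ] [DecidableEq κ] {n : ℕ}

lemma psd_real_smul {m : Type*} [Fintype m] {A : Matrix m m ℂ} (hA : A.PosSemidef) {c : ℝ}
    (hc : 0 ≤ c) : (c • A).PosSemidef := by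
  have h : (c • A) = ((c : ℂ)) • A := by
    ext a b
    simp [Matrix.smul_apply, Complex.real_smul]
  rw [h]
  constructor
  · have h1 : star (c : ℂ) = (c : ℂ) := by
      rw [Complex.star_def, Complex.conj_ofReal]
    rw [Matrix.IsHermitian, Matrix.conjTranspose_smul, h1, hA.1.eq]
  · exact (hA.smul (Complex.zero_le_real.mpr hc)).2

/-- Existence of a `W1` decomposition of the difference of two states. -/
lemma exists_decomp [Nonempty κ] {ρ σ : Matrix (Fin n → κ) (Fin n → κ) ℂ}
    (hρ : IsState ρ) (hσ : IsState σ) :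
    ∃ (c : Fin n → ℝ) (τ η : Fin n → Matrix (Fin n → κ) (Fin n → κ) ℂ),
      (∀ i, 0 ≤ c i) ∧ (∀ i, IsState (τ i)) ∧ (∀ i, IsState (η i)) ∧
      (∀ i, marginal (τ i) ({i}ᶜ : Finset (Fin n)) = marginal (η i) ({i}ᶜ : Finset (Fin n))) ∧
      ρ - σ = ∑ i, c i • (τ i - η i) := by
  classical
  set Jset : ℕ → Finset (Fin n) := fun m => Finset.filter (fun x : Fin n => (x : ℕ) < m)
    Finset.univ with hJset
  refine ⟨fun _ => 1, fun i => omegaJ ρ σ (Jset ((i : ℕ) + 1)), fun i => omegaJ ρ σ (Jset (i : ℕ)),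
    fun _ => zero_le_one, ?_, ?_, ?_, ?_⟩
  · intro i
    exact ⟨omega_psd hρ.1 hσ.1 _, by rw [omega_trace, hρ.2, hσ.2, one_mul]⟩
  · intro i
    exact ⟨omega_psd hρ.1 hσ.1 _, by rw [omega_trace, hρ.2, hσ.2, one_mul]⟩
  · intro i
    have hJsucc : Jset ((i : ℕ) + 1) = insert i (Jset (i : ℕ)) := by
      ext x
      simp only [hJset, Finset.mem_filter, Finset.mem_univ, true_and, Finset.mem_insert,
        Nat.lt_succ_iff_lt_or_eq, Fin.ext_iff]
      tauto
    have hiJ : i ∉ Jset (i : ℕ) := by simp [hJset]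
    show marginal (omegaJ ρ σ (Jset ((i : ℕ) + 1))) ({i}ᶜ : Finset (Fin n))
      = marginal (omegaJ ρ σ (Jset (i : ℕ))) ({i}ᶜ : Finset (Fin n))
    rw [hJsucc]
    exact omega_marg_step hiJ
  · have hlast : Jset n = Finset.univ := by
      ext x
      simp [hJset, x.isLt]
    have hfirst : Jset 0 = ∅ := by
      ext x
      simp [hJset]
    have htel := Finset.sum_range_sub (fun m => omegaJ ρ σ (Jset m)) n
    simp only [one_smul]
    rw [Fin.sum_univ_eq_sum_range (fun m => omegaJ ρ σ (Jset (m + 1)) - omegaJ ρ σ (Jset m)) n,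
      htel, hlast, hfirst, omega_univ hσ.2, omega_empty hρ.2]

lemma count_mem_powersetCard (i : Fin n) (k : ℕ) (hk1 : 1 ≤ k) :
    (Finset.filter (fun I => i ∈ I)
        (Finset.powersetCard k (Finset.univ : Finset (Fin n)))).card
      = (n - 1).choose (k - 1) := by
  classical
  have hbij : (Finset.filter (fun I => i ∈ I)
      (Finset.powersetCard k (Finset.univ : Finset (Fin n)))).card
      = (Finset.powersetCard (k - 1) ((Finset.univ : Finset (Fin n)).erase i)).card := by
    refine Finset.card_bij' (fun I _ => I.erase i) (fun J _ => insert i J) ?_ ?_ ?_ ?_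
    · intro I hI
      rw [Finset.mem_filter, Finset.mem_powersetCard] at hI
      rw [Finset.mem_powersetCard]
      exact ⟨Finset.erase_subset_erase i (Finset.subset_univ I),
        by rw [Finset.card_erase_of_mem hI.2, hI.1.2]⟩
    · intro J hJ
      rw [Finset.mem_powersetCard] at hJ
      have hiJ : i ∉ J := fun h => (Finset.notMem_erase i _) (hJ.1 h)
      rw [Finset.mem_filter, Finset.mem_powersetCard]
      refine ⟨⟨Finset.subset_univ _, ?_⟩, Finset.mem_insert_self i J⟩
      rw [Finset.card_insert_of_notMem hiJ, hJ.2, Nat.sub_add_cancel hk1]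
    · intro I hI
      rw [Finset.mem_filter] at hI
      exact Finset.insert_erase hI.2
    · intro J hJ
      rw [Finset.mem_powersetCard] at hJ
      exact Finset.erase_insert (fun h => (Finset.notMem_erase i _) (hJ.1 h))
  rw [hbij, Finset.card_powersetCard, Finset.card_erase_of_mem (Finset.mem_univ i),
    Finset.card_univ, Fintype.card_fin]

end MainAux

/-- For states `ρ, σ` on `H^{⊗n}` and `1 ≤ k ≤ n`, the averaged
trace distance between the size-`k` marginals is bounded by `(k/n)·‖ρ − σ‖_{W1}`. -/
theorem averaged_marginal_traceDist_le_W1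
    {d : ℕ} {n : ℕ} (hn : 1 ≤ n) (k : ℕ) (hk1 : 1 ≤ k) (hkn : k ≤ n)
    (ρ σ : Matrix (Fin n → Fin d) (Fin n → Fin d) ℂ)
    (hρ : IsState ρ) (hσ : IsState σ) :
    ((n.choose k : ℝ))⁻¹ *
        ∑ I ∈ Finset.powersetCard k (Finset.univ : Finset (Fin n)),
          (1 / 2) * traceNorm (marginal ρ I - marginal σ I)
      ≤ ((k : ℝ) / n) * W1 (ρ - σ) := by
  classical
  rcases Nat.eq_zero_or_pos d with hd | hd
  · exfalso
    subst hd
    haveI : IsEmpty (Fin n → Fin 0) := ⟨fun g => (g ⟨0, hn⟩).elim0⟩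
    have h1 := hρ.2
    rw [Matrix.trace] at h1
    simp at h1
  haveI : Nonempty (Fin d) := ⟨⟨0, hd⟩⟩
  have hn0 : (0:ℝ) < n := by exact_mod_cast hn
  have hk0 : (0:ℝ) < k := by exact_mod_cast hk1
  have hC0 : (0:ℝ) < (n.choose k : ℝ) := by exact_mod_cast Nat.choose_pos hkn
  set A : ℝ := ((n.choose k : ℝ))⁻¹ *
    ∑ I ∈ Finset.powersetCard k (Finset.univ : Finset (Fin n)),
      (1 / 2) * traceNorm (marginal ρ I - marginal σ I) with hAdef
  set S : Set ℝ := { w : ℝ |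
    ∃ (c : Fin n → ℝ) (τ η : Fin n → Matrix (Fin n → Fin d) (Fin n → Fin d) ℂ),
      (∀ i, 0 ≤ c i) ∧ (∀ i, IsState (τ i)) ∧ (∀ i, IsState (η i)) ∧
      (∀ i, marginal (τ i) ({i}ᶜ : Finset (Fin n)) = marginal (η i) ({i}ᶜ : Finset (Fin n))) ∧
      ρ - σ = ∑ i, c i • (τ i - η i) ∧ w = ∑ i, c i } with hSdef
  have hW1 : W1 (ρ - σ) = sInf S := rfl
  have hSne : S.Nonempty := by
    obtain ⟨c, τ, η, hc, hτ, hη, hm, heq⟩ := exists_decomp hρ hσ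
    exact ⟨∑ i, c i, c, τ, η, hc, hτ, hη, hm, heq, rfl⟩
  have key : ∀ w ∈ S, A ≤ ((k:ℝ)/n) * w := by
    rintro w ⟨c, τ, η, hc, hτ, hη, hm, heq, hw⟩
    have perI : ∀ I ∈ Finset.powersetCard k (Finset.univ : Finset (Fin n)),
        (1 / 2) * traceNorm (marginal ρ I - marginal σ I) ≤ ∑ i ∈ I, c i := by
      intro I _
      set P := ∑ i ∈ I, c i • marginal (τ i) I with hP
      set Q := ∑ i ∈ I, c i • marginal (η i) I with hQ
      have hX : marginal ρ I - marginal σ I = P - Q := by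
        rw [← marg_sub, heq, marg_sum]
        have h4 : ∑ i : Fin n, marginal (c i • (τ i - η i)) I
            = ∑ i ∈ I, marginal (c i • (τ i - η i)) I := by
          refine (Finset.sum_subset (Finset.subset_univ I) ?_).symm
          intro i _ hiI
          rw [marg_smul, marg_sub, marg_eq_of_site_marg_eq (hm i) hiI, sub_self, smul_zero]
        rw [h4, hP, hQ, ← Finset.sum_sub_distrib]
        refine Finset.sum_congr rfl fun i _ => ?_
        rw [marg_smul, marg_sub, smul_sub]
      have hPpsd : P.PosSemidef := by
        refine Finset.sum_induction _ _ (fun a b ha hb => ha.add hb) Matrix.PosSemidef.zero ?_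
        intro i _
        exact psd_real_smul (marg_psd (hτ i).1 I) (hc i)
      have hQpsd : Q.PosSemidef := by
        refine Finset.sum_induction _ _ (fun a b ha hb => ha.add hb) Matrix.PosSemidef.zero ?_
        intro i _
        exact psd_real_smul (marg_psd (hη i).1 I) (hc i)
      have hPtr : P.trace.re = ∑ i ∈ I, c i := by
        rw [hP, Matrix.trace_sum, Complex.re_sum]
        refine Finset.sum_congr rfl fun i _ => ?_
        rw [Matrix.trace_smul, marg_trace, (hτ i).2]
        simp [Complex.real_smul]
      have hQtr : Q.trace.re = ∑ i ∈ I, c i := by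
        rw [hQ, Matrix.trace_sum, Complex.re_sum]
        refine Finset.sum_congr rfl fun i _ => ?_
        rw [Matrix.trace_smul, marg_trace, (hη i).2]
        simp [Complex.real_smul]
      have hbound := traceNorm_sub_psd_le hPpsd hQpsd hX
      rw [hPtr, hQtr] at hbound
      linarith
    have hsum : ∑ I ∈ Finset.powersetCard k (Finset.univ : Finset (Fin n)),
        (1 / 2) * traceNorm (marginal ρ I - marginal σ I)
        ≤ ∑ I ∈ Finset.powersetCard k (Finset.univ : Finset (Fin n)), ∑ i ∈ I, c i :=
      Finset.sum_le_sum perI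
    have hcount : ∑ I ∈ Finset.powersetCard k (Finset.univ : Finset (Fin n)), ∑ i ∈ I, c i
        = ((n-1).choose (k-1) : ℝ) * ∑ i, c i := by
      calc ∑ I ∈ Finset.powersetCard k (Finset.univ : Finset (Fin n)), ∑ i ∈ I, c i
          = ∑ I ∈ Finset.powersetCard k (Finset.univ : Finset (Fin n)),
              ∑ i : Fin n, (if i ∈ I then c i else 0) := by
            refine Finset.sum_congr rfl fun I _ => ?_
            rw [Finset.sum_ite_mem, Finset.univ_inter]
        _ = ∑ i : Fin n, ∑ I ∈ Finset.powersetCard k (Finset.univ : Finset (Fin n)),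
              (if i ∈ I then c i else 0) := Finset.sum_comm
        _ = ∑ i : Fin n, ((n-1).choose (k-1) : ℝ) * c i := by
            refine Finset.sum_congr rfl fun i _ => ?_
            rw [← Finset.sum_filter, Finset.sum_const, count_mem_powersetCard i k hk1,
              nsmul_eq_mul]
        _ = ((n-1).choose (k-1) : ℝ) * ∑ i, c i := by rw [← Finset.mul_sum]
    have hid : (n:ℝ) * ((n-1).choose (k-1) : ℝ) = (k:ℝ) * (n.choose k : ℝ) := by
      have h1 : n - 1 + 1 = n := Nat.succ_pred_eq_of_pos hn
      have h2 : k - 1 + 1 = k := Nat.succ_pred_eq_of_pos hk1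
      have hnat : n * ((n-1).choose (k-1)) = (n.choose k) * k := by
        have h3 := Nat.add_one_mul_choose_eq (n-1) (k-1)
        rwa [h1, h2] at h3
      have h5 : (n:ℝ) * ((n-1).choose (k-1) : ℝ) = ((n.choose k : ℕ) : ℝ) * (k:ℝ) := by
        exact_mod_cast congrArg (fun x : ℕ => (x:ℝ)) hnat
      linarith
    have hratio : ((n.choose k : ℝ))⁻¹ * (((n-1).choose (k-1) : ℝ) * ∑ i, c i)
        = ((k:ℝ)/n) * ∑ i, c i := by
      have hDC : ((n-1).choose (k-1) : ℝ) / (n.choose k : ℝ) = (k:ℝ) / n := by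
        rw [div_eq_div_iff hC0.ne' hn0.ne']
        linarith
      calc ((n.choose k : ℝ))⁻¹ * (((n-1).choose (k-1) : ℝ) * ∑ i, c i)
          = (((n-1).choose (k-1) : ℝ) / (n.choose k : ℝ)) * ∑ i, c i := by ring
        _ = ((k:ℝ)/n) * ∑ i, c i := by rw [hDC]
    calc A ≤ ((n.choose k : ℝ))⁻¹ *
          ∑ I ∈ Finset.powersetCard k (Finset.univ : Finset (Fin n)), ∑ i ∈ I, c i := by
          rw [hAdef]
          exact mul_le_mul_of_nonneg_left hsum (by positivity)
      _ = ((k:ℝ)/n) * ∑ i, c i := by rw [hcount, hratio]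
      _ = ((k:ℝ)/n) * w := by rw [hw]
  have h1 : ((n:ℝ)/k) * A ≤ sInf S := by
    refine le_csInf hSne ?_
    intro w hw
    have h2 := key w hw
    calc ((n:ℝ)/k) * A ≤ ((n:ℝ)/k) * (((k:ℝ)/n) * w) :=
          mul_le_mul_of_nonneg_left h2 (by positivity)
      _ = w := by field_simp
  calc A = ((k:ℝ)/n) * (((n:ℝ)/k) * A) := by field_simp
    _ ≤ ((k:ℝ)/n) * sInf S := mul_le_mul_of_nonneg_left h1 (by positivity)
    _ = ((k:ℝ)/n) * W1 (ρ - σ) := by rw [hW1]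

end AlmostIID
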